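/- Let m ≥ 1, let T : ℝ^m → ℝ^m be continuous, let n ≥ 1, let G₁, …, G_n : ℝ^m → ℝ^m be continuous, and let ε > 0. Then there exist one-hidden-layer ReLU networks A⁽¹⁾, …, A⁽ⁿ⁾ : ℝ^m → ℝ^m such that the recurrence H⁽⁰⁾(x) = x, H⁽ᵗ⁾(x) = T(H⁽ᵗ⁻¹⁾(x)) + A⁽ᵗ⁾(H⁽ᵗ⁻¹⁾(x)) for t = 1, …, n satisfies sup_{x ∈ [0,1]^m} ‖H⁽ⁿ⁾(x) − (G_n ∘ ⋯ ∘ G₁)(x)‖_∞ ≤ ε. (The n-step ScaleNet recurrence with a fixed shared layer T and per-step adapters can uniformly track any prescribed composition of n continuous maps on the input cube; this is the skeleton of Steps 2–3 of the proof of Theorem 1, where the recurrent structure implements the quantization followed by the lookup-table value mapping.) -/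

import Mathlib

/-- A one-hidden-layer ReLU network from ℝ^m to ℝ^p:
`x ↦ W₂ · σ(W₁ x + b₁) + b₂` with componentwise ReLU `σ(t) = max t 0`. -/
def IsReLUNet {m p : ℕ} (A : (Fin m → ℝ) → (Fin p → ℝ)) : Prop :=
  ∃ (k : ℕ) (W₁ : Matrix (Fin k) (Fin m) ℝ) (b₁ : Fin k → ℝ)
    (W₂ : Matrix (Fin p) (Fin k) ℝ) (b₂ : Fin p → ℝ),
    ∀ x, A x = W₂.mulVec (fun i => max (W₁.mulVec x i + b₁ i) 0) + b₂

/-- The ScaleNet recurrence: `H⁽⁰⁾(x) = x`,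
`H⁽ᵗ⁾(x) = T(H⁽ᵗ⁻¹⁾(x)) + A⁽ᵗ⁾(H⁽ᵗ⁻¹⁾(x))`. -/
def scaleNetIter {m : ℕ} (T : (Fin m → ℝ) → (Fin m → ℝ))
    (A : ℕ → (Fin m → ℝ) → (Fin m → ℝ)) : ℕ → (Fin m → ℝ) → (Fin m → ℝ)
  | 0 => fun x => x
  | (t + 1) => fun x => T (scaleNetIter T A t x) + A (t + 1) (scaleNetIter T A t x)

/-- The composition `G_t ∘ ⋯ ∘ G₁` of a sequence of maps (the empty composition
being the identity). -/
def compSeq {m : ℕ} (G : ℕ → (Fin m → ℝ) → (Fin m → ℝ)) : ℕ → (Fin m → ℝ) → (Fin m → ℝ)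
  | 0 => fun x => x
  | (t + 1) => fun x => G (t + 1) (compSeq G t x)

def IsScalarNet {m : ℕ} (f : (Fin m → ℝ) → ℝ) : Prop :=
  ∃ (k : ℕ) (a : Fin k → ℝ) (w : Fin k → Fin m → ℝ) (b : Fin k → ℝ) (c : ℝ),
    ∀ x, f x = c + ∑ i, a i * max ((∑ j, w i j * x j) + b i) 0

lemma isScalarNet_of_fintype {m : ℕ} {f : (Fin m → ℝ) → ℝ} (ι : Type) [Fintype ι]
    (a : ι → ℝ) (w : ι → Fin m → ℝ) (b : ι → ℝ) (c : ℝ)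
    (h : ∀ x, f x = c + ∑ i, a i * max ((∑ j, w i j * x j) + b i) 0) :
    IsScalarNet f := by
  obtain ⟨e⟩ : Nonempty (ι ≃ Fin (Fintype.card ι)) := ⟨Fintype.equivFin ι⟩
  refine ⟨Fintype.card ι, a ∘ e.symm, w ∘ e.symm, b ∘ e.symm, c, fun x => ?_⟩
  rw [h x]
  congr 1
  exact (Equiv.sum_comp e.symm fun i => a i * max ((∑ j, w i j * x j) + b i) 0).symm

lemma IsScalarNet.add {m : ℕ} {f g : (Fin m → ℝ) → ℝ} (hf : IsScalarNet f)
    (hg : IsScalarNet g) : IsScalarNet (fun x => f x + g x) := by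
  obtain ⟨k1, a1, w1, b1, c1, h1⟩ := hf
  obtain ⟨k2, a2, w2, b2, c2, h2⟩ := hg
  refine isScalarNet_of_fintype (Fin k1 ⊕ Fin k2) (Sum.elim a1 a2) (Sum.elim w1 w2)
    (Sum.elim b1 b2) (c1 + c2) (fun x => ?_)
  rw [h1 x, h2 x, Fintype.sum_sum_type]
  simp only [Sum.elim_inl, Sum.elim_inr]
  ring

lemma IsScalarNet.smul {m : ℕ} {f : (Fin m → ℝ) → ℝ} (hf : IsScalarNet f) (r : ℝ) :
    IsScalarNet (fun x => r * f x) := by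
  obtain ⟨k, a, w, b, c, h⟩ := hf
  refine ⟨k, fun i => r * a i, w, b, r * c, fun x => ?_⟩
  simp only [h x, mul_add, Finset.mul_sum]
  ring_nf

lemma pl_approx (g : ℝ → ℝ) (hg : Continuous g) (a b ε : ℝ) (hε : 0 < ε) :
    ∃ (ι : Type) (_ : Fintype ι) (co th : ι → ℝ) (c : ℝ),
      ∀ t ∈ Set.Icc a b, |c + (∑ i, co i * max (t - th i) 0) - g t| ≤ ε := by
  by_cases hba : b ≤ a
  · refine ⟨Fin 0, inferInstance, ![], ![], g a, fun t ht => ?_⟩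
    have hta : t = a := le_antisymm (ht.2.trans hba) ht.1
    simp [hta, hε.le]
  push_neg at hba
  have hcont := (isCompact_Icc (a := a) (b := b)).uniformContinuousOn_of_continuous
    hg.continuousOn
  rw [Metric.uniformContinuousOn_iff] at hcont
  obtain ⟨δ, hδ, hmod⟩ := hcont (ε/2) (by positivity)
  obtain ⟨N, hN⟩ := exists_nat_gt ((b - a)/δ)
  have hN0 : 0 < N := by
    have h' : (0:ℝ) < N := lt_of_le_of_lt (div_nonneg (by linarith) hδ.le) hN
    exact_mod_cast h'
  have hN0' : (0:ℝ) < N := by exact_mod_cast hN0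
  set Δ : ℝ := (b - a)/N with hΔdef
  have hΔpos : 0 < Δ := div_pos (sub_pos.2 hba) hN0'
  have hΔδ : Δ < δ := by
    rw [hΔdef, div_lt_iff₀ hN0']
    calc b - a = ((b-a)/δ) * δ := by field_simp
    _ < N * δ := by gcongr
    _ = δ * N := mul_comm _ _
  set X : ℕ → ℝ := fun i => a + i * Δ with hX
  set s : ℕ → ℝ := fun i => (g (X (i+1)) - g (X i)) / Δ with hs
  have hXmono : ∀ {i j : ℕ}, i ≤ j → X i ≤ X j := by
    intro i j hij
    have h' : (i:ℝ) ≤ j := by exact_mod_cast hij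
    simp only [hX]
    nlinarith [hΔpos.le]
  have hX0 : X 0 = a := by simp [hX]
  have hXN : X N = b := by
    simp only [hX, hΔdef]
    field_simp
    ring
  have hXd : ∀ i : ℕ, X (i + 1) - X i = Δ := by
    intro i
    simp only [hX]
    push_cast
    ring
  refine ⟨Fin N × Bool, inferInstance, fun p => if p.2 then -(s p.1) else s p.1,
    fun p => if p.2 then X (p.1 + 1) else X p.1, g a, fun t ht => ?_⟩
  obtain ⟨hta, htb⟩ := ht
  have hsum : (∑ p : Fin N × Bool, (if p.2 then -(s p.1) else s p.1)
        * max (t - (if p.2 then X (p.1 + 1) else X p.1)) 0)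
      = ∑ i ∈ Finset.range N, s i * (max (t - X i) 0 - max (t - X (i+1)) 0) := by
    rw [Fintype.sum_prod_type, ← Fin.sum_univ_eq_sum_range]
    refine Finset.sum_congr rfl fun i _ => ?_
    rw [Fintype.sum_bool]
    simp only [if_true, Bool.false_eq_true, if_false]
    ring
  rw [hsum]
  set u : ℝ := (t - a)/Δ with hu
  have hu0 : 0 ≤ u := div_nonneg (by linarith) hΔpos.le
  set j : ℕ := min ⌊u⌋₊ (N - 1) with hj
  have hjN : j < N := lt_of_le_of_lt (min_le_right _ _) (Nat.sub_lt hN0 one_pos)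
  have hjle : (j : ℝ) ≤ u := by
    have h' : j ≤ ⌊u⌋₊ := min_le_left _ _
    calc (j:ℝ) ≤ (⌊u⌋₊ : ℝ) := by exact_mod_cast h'
      _ ≤ u := Nat.floor_le hu0
  have h1 : X j ≤ t := by
    have h' : (j : ℝ) * Δ ≤ t - a := by
      have := (le_div_iff₀ hΔpos).1 hjle
      linarith
    simp only [hX]; linarith
  have hule : u ≤ (j : ℝ) + 1 := by
    rcases le_total (⌊u⌋₊) (N - 1) with h | h
    · have hjf : j = ⌊u⌋₊ := min_eq_left h
      rw [hjf]
      exact (Nat.lt_floor_add_one u).le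
    · have hjf : j = N - 1 := min_eq_right h
      have huN : u ≤ N := by
        rw [hu, div_le_iff₀ hΔpos]
        have hb' : X N = b := hXN
        simp only [hX] at hb'
        linarith
      rw [hjf]
      have hc : ((N - 1 : ℕ) : ℝ) + 1 = N := by
        have := Nat.succ_pred_eq_of_pos hN0
        exact_mod_cast congrArg (Nat.cast : ℕ → ℝ) this
      linarith
  have h2 : t ≤ X (j + 1) := by
    have h' : t - a ≤ ((j:ℝ) + 1) * Δ := by
      have := (div_le_iff₀ hΔpos).1 hule
      linarith
    simp only [hX]
    push_cast
    linarith
  have hsplit := Finset.sum_range_add_sum_Ico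
    (fun i => s i * (max (t - X i) 0 - max (t - X (i+1)) 0)) (Nat.succ_le_of_lt hjN)
  have htail : (∑ i ∈ Finset.Ico (j+1) N, s i * (max (t - X i) 0 - max (t - X (i+1)) 0)) = 0 := by
    refine Finset.sum_eq_zero fun i hi => ?_
    have hji : j + 1 ≤ i := (Finset.mem_Ico.1 hi).1
    have e1 : max (t - X i) 0 = 0 := max_eq_right (by have := h2.trans (hXmono hji); linarith)
    have e2 : max (t - X (i+1)) 0 = 0 := max_eq_right
      (by have := h2.trans (hXmono (hji.trans (Nat.le_succ i))); linarith)
    rw [e1, e2]; ring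
  have hhead : (∑ i ∈ Finset.range j, s i * (max (t - X i) 0 - max (t - X (i+1)) 0))
      = g (X j) - g a := by
    have hc : ∀ i ∈ Finset.range j, s i * (max (t - X i) 0 - max (t - X (i+1)) 0)
        = g (X (i+1)) - g (X i) := by
      intro i hi
      have hij : i + 1 ≤ j := Nat.succ_le_of_lt (Finset.mem_range.1 hi)
      have hiXj : X i ≤ X j := hXmono (Nat.le_of_lt (Finset.mem_range.1 hi))
      have hi1Xj : X (i+1) ≤ X j := hXmono hij
      have e1 : max (t - X i) 0 = t - X i := max_eq_left (by linarith)
      have e2 : max (t - X (i+1)) 0 = t - X (i+1) := max_eq_left (by linarith)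
      rw [e1, e2]
      simp only [hs]
      have hd : t - X i - (t - X (i+1)) = Δ := by have := hXd i; linarith
      rw [hd]
      exact div_mul_cancel₀ _ hΔpos.ne'
    rw [Finset.sum_congr rfl hc, Finset.sum_range_sub (fun i => g (X i)), hX0]
  have hterm : s j * (max (t - X j) 0 - max (t - X (j+1)) 0) = s j * (t - X j) := by
    rw [max_eq_left (by linarith), max_eq_right (by linarith)]
    ring
  have hFval : (∑ i ∈ Finset.range N, s i * (max (t - X i) 0 - max (t - X (i+1)) 0))
      = g (X j) - g a + s j * (t - X j) := by
    rw [← hsplit, htail, add_zero, Finset.sum_range_succ, hhead, hterm]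
  rw [hFval]
  have hXja : a ≤ X j := by rw [← hX0]; exact hXmono (Nat.zero_le j)
  have hXjb : X j ≤ b := h1.trans htb
  have hXj1b : X (j+1) ≤ b := by rw [← hXN]; exact hXmono hjN
  have hXj1a : a ≤ X (j+1) := hXja.trans (by have := hXd j; linarith)
  have hd1 : dist (g (X j)) (g t) < ε/2 := by
    refine hmod (X j) ⟨hXja, hXjb⟩ t ⟨hta, htb⟩ ?_
    rw [Real.dist_eq]
    have := hXd j
    rw [abs_sub_comm, abs_of_nonneg (by linarith)]
    linarith
  have hd2 : dist (g (X (j+1))) (g (X j)) < ε/2 := by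
    refine hmod _ ⟨hXj1a, hXj1b⟩ _ ⟨hXja, hXjb⟩ ?_
    rw [Real.dist_eq, hXd j, abs_of_pos hΔpos]
    exact hΔδ
  rw [Real.dist_eq] at hd1 hd2
  have hsj : |s j * (t - X j)| ≤ |g (X (j+1)) - g (X j)| := by
    rw [abs_mul]
    simp only [hs]
    rw [abs_div, abs_of_pos hΔpos, div_mul_eq_mul_div, div_le_iff₀ hΔpos]
    have h3 : |t - X j| ≤ Δ := by
      rw [abs_of_nonneg (by linarith)]
      have := hXd j; linarith
    exact mul_le_mul_of_nonneg_left h3 (abs_nonneg _)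
  calc |g a + (g (X j) - g a + s j * (t - X j)) - g t|
      = |(g (X j) - g t) + s j * (t - X j)| := congrArg abs (by ring)
    _ ≤ |g (X j) - g t| + |s j * (t - X j)| := abs_add_le _ _
    _ ≤ |g (X j) - g t| + |g (X (j+1)) - g (X j)| := by linarith
    _ ≤ ε/2 + ε/2 := by linarith
    _ = ε := by ring

lemma isScalarNet_zero {m : ℕ} : IsScalarNet (fun _ : Fin m → ℝ => (0:ℝ)) :=
  ⟨0, ![], ![], ![], 0, by simp⟩

/-- A ridge cosine is approximable by scalar nets on a compact set. -/
lemma ridge_cos_approx {m : ℕ} (K : Set (Fin m → ℝ)) (hK : IsCompact K)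
    (w : Fin m → ℝ) (b : ℝ) (ε : ℝ) (hε : 0 < ε) :
    ∃ f, IsScalarNet f ∧ ∀ x ∈ K, |f x - Real.cos ((∑ j, w j * x j) + b)| ≤ ε := by
  have hL : Continuous (fun x : Fin m → ℝ => ∑ j, w j * x j) := by
    continuity
  obtain ⟨R, hR⟩ := (hK.image hL).isBounded.subset_closedBall 0
  have hcos : Continuous (fun u : ℝ => Real.cos (u + b)) := by continuity
  obtain ⟨ι, hι, co, th, c, hpl⟩ := pl_approx _ hcos (-R) R ε hε
  refine ⟨fun x => c + ∑ i : ι, co i * max ((∑ j, w j * x j) + (-(th i))) 0,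
    isScalarNet_of_fintype ι co (fun _ => w) (fun i => -(th i)) c (fun x => rfl), fun x hx => ?_⟩
  have hmem : (∑ j, w j * x j) ∈ Metric.closedBall (0:ℝ) R := hR ⟨x, hx, rfl⟩
  rw [Real.closedBall_eq_Icc, zero_sub, zero_add] at hmem
  have := hpl _ hmem
  simpa [sub_eq_add_neg] using this

open scoped Real in
/-- Scalar universal approximation on a compact set. -/
lemma scalar_dense {m : ℕ} (K : Set (Fin m → ℝ)) (hK : IsCompact K)
    (f : (Fin m → ℝ) → ℝ) (hf : Continuous f) (ε : ℝ) (hε : 0 < ε) :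
    ∃ g, IsScalarNet g ∧ ∀ x ∈ K, |g x - f x| ≤ ε := by
  haveI : CompactSpace K := isCompact_iff_compactSpace.1 hK
  -- the ridge cosines as continuous maps on K
  let cosF : (Fin m → ℝ) → ℝ → C(K, ℝ) := fun w b =>
    ⟨fun x => Real.cos ((∑ j, w j * (x : Fin m → ℝ) j) + b), by
      apply Real.continuous_cos.comp
      apply Continuous.add _ continuous_const
      exact continuous_finset_sum _ fun j _ =>
        continuous_const.mul ((continuous_apply j).comp continuous_subtype_val)⟩
  let S : Set C(K, ℝ) := {φ | ∃ w b, φ = cosF w b}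
  let V : Submodule ℝ C(K, ℝ) := Submodule.span ℝ S
  have h1 : (1 : C(K, ℝ)) ∈ V := by
    have : (1 : C(K, ℝ)) = cosF 0 0 := by
      ext x
      simp [cosF]
    rw [this]
    exact Submodule.subset_span ⟨0, 0, rfl⟩
  have hmulS : ∀ w b w' b', cosF w b * cosF w' b' ∈ V := by
    intro w b w' b'
    have hid : cosF w b * cosF w' b'
        = (1/2 : ℝ) • cosF (w + w') (b + b') + (1/2 : ℝ) • cosF (w - w') (b - b') := by
      ext x
      simp only [ContinuousMap.mul_apply, ContinuousMap.add_apply, ContinuousMap.smul_apply,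
        smul_eq_mul, cosF, ContinuousMap.coe_mk]
      have e1 : (∑ j, (w + w') j * (x : Fin m → ℝ) j) + (b + b')
          = ((∑ j, w j * (x : Fin m → ℝ) j) + b) + ((∑ j, w' j * (x : Fin m → ℝ) j) + b') := by
        simp [add_mul, Finset.sum_add_distrib]
        ring
      have e2 : (∑ j, (w - w') j * (x : Fin m → ℝ) j) + (b - b')
          = ((∑ j, w j * (x : Fin m → ℝ) j) + b) - ((∑ j, w' j * (x : Fin m → ℝ) j) + b') := by
        simp [sub_mul, Finset.sum_sub_distrib]
        ring
      rw [e1, e2]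
      set P := (∑ j, w j * (x : Fin m → ℝ) j) + b
      set Q := (∑ j, w' j * (x : Fin m → ℝ) j) + b'
      have h3 := Real.cos_add P Q
      have h4 := Real.cos_sub P Q
      nlinarith [h3, h4]
    rw [hid]
    exact V.add_mem (V.smul_mem _ (Submodule.subset_span ⟨_, _, rfl⟩))
      (V.smul_mem _ (Submodule.subset_span ⟨_, _, rfl⟩))
  have hmul : ∀ φ ψ : C(K, ℝ), φ ∈ V → ψ ∈ V → φ * ψ ∈ V := by
    intro φ ψ hφ hψ
    induction hφ using Submodule.span_induction with
    | mem u hu =>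
      induction hψ using Submodule.span_induction with
      | mem v hv =>
        obtain ⟨w, b, rfl⟩ := hu
        obtain ⟨w', b', rfl⟩ := hv
        exact hmulS w b w' b'
      | zero => rw [mul_zero]; exact V.zero_mem
      | add y z _ _ hy hz => rw [mul_add]; exact V.add_mem hy hz
      | smul r y _ hy => rw [mul_smul_comm]; exact V.smul_mem r hy
    | zero => rw [zero_mul]; exact V.zero_mem
    | add y z _ _ hy hz => rw [add_mul]; exact V.add_mem hy hz
    | smul r y _ hy => rw [smul_mul_assoc]; exact V.smul_mem r hy
  let A : Subalgebra ℝ C(K, ℝ) := V.toSubalgebra h1 hmul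
  have hsep : A.SeparatesPoints := by
    intro x y hxy
    have hxy' : (x : Fin m → ℝ) ≠ (y : Fin m → ℝ) := fun h => hxy (Subtype.ext h)
    obtain ⟨j, hj⟩ := Function.ne_iff.1 hxy'
    set d : ℝ := (x : Fin m → ℝ) j - (y : Fin m → ℝ) j with hd
    have hd0 : d ≠ 0 := sub_ne_zero.2 hj
    set τ : ℝ := (π / 2) / |d| with hτ
    set w : Fin m → ℝ := fun j' => if j' = j then τ else 0 with hw
    have hsum : ∀ z : K, (∑ j', w j' * (z : Fin m → ℝ) j') = τ * (z : Fin m → ℝ) j := by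
      intro z
      rw [Finset.sum_eq_single j]
      · simp [hw]
      · intro i _ hij; simp [hw, hij]
      · simp
    refine ⟨cosF w (-(τ * (y : Fin m → ℝ) j)), ⟨cosF w (-(τ * (y : Fin m → ℝ) j)),
      Submodule.subset_span ⟨_, _, rfl⟩, rfl⟩, ?_⟩
    simp only [cosF, ContinuousMap.coe_mk]
    rw [hsum x, hsum y]
    have harg : τ * (x : Fin m → ℝ) j + -(τ * (y : Fin m → ℝ) j) = τ * d := by
      rw [hd]; ring
    rw [harg]
    have hyarg : τ * (y : Fin m → ℝ) j + -(τ * (y : Fin m → ℝ) j) = 0 := by ring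
    rw [hyarg, Real.cos_zero]
    have : Real.cos (τ * d) = 0 := by
      rcases abs_choice d with h | h
      · have : τ * d = π / 2 := by
          rw [hτ, h]; field_simp
        rw [this, Real.cos_pi_div_two]
      · have : τ * d = -(π / 2) := by
          rw [hτ, h]
          have : |d| ≠ 0 := fun hc => hd0 (abs_eq_zero.1 hc)
          field_simp
        rw [this, Real.cos_neg, Real.cos_pi_div_two]
    rw [this]
    norm_num
  have htop := ContinuousMap.subalgebra_topologicalClosure_eq_top_of_separatesPoints A hsep
  -- the restriction of f to K
  let F : C(K, ℝ) := ⟨fun x => f x, hf.comp continuous_subtype_val⟩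
  have hFmem : F ∈ A.topologicalClosure := htop ▸ Algebra.mem_top
  have hFcl : F ∈ closure (A : Set C(K, ℝ)) := hFmem
  obtain ⟨v, hvA, hvd⟩ := Metric.mem_closure_iff.1 hFcl (ε/2) (by positivity)
  -- every element of V is approximable by scalar nets
  have happrox : ∀ φ ∈ V, ∀ η : ℝ, 0 < η →
      ∃ g, IsScalarNet g ∧ ∀ x : K, |g (x : Fin m → ℝ) - φ x| ≤ η := by
    intro φ hφ
    induction hφ using Submodule.span_induction with
    | mem u hu =>
      intro η hη
      obtain ⟨w, b, rfl⟩ := hu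
      obtain ⟨g, hg, hgb⟩ := ridge_cos_approx K hK w b η hη
      exact ⟨g, hg, fun x => hgb _ x.2⟩
    | zero =>
      intro η hη
      exact ⟨fun _ => 0, isScalarNet_zero, fun x => by simp [hη.le]⟩
    | add y z _ _ hy hz =>
      intro η hη
      obtain ⟨g1, hg1, hb1⟩ := hy (η/2) (by positivity)
      obtain ⟨g2, hg2, hb2⟩ := hz (η/2) (by positivity)
      refine ⟨fun x => g1 x + g2 x, hg1.add hg2, fun x => ?_⟩
      have := hb1 x
      have := hb2 x
      simp only [ContinuousMap.add_apply]
      calc |g1 (x:Fin m → ℝ) + g2 (x:Fin m → ℝ) - (y x + z x)|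
          = |(g1 (x:Fin m → ℝ) - y x) + (g2 (x:Fin m → ℝ) - z x)| := congrArg abs (by ring)
        _ ≤ |g1 (x:Fin m → ℝ) - y x| + |g2 (x:Fin m → ℝ) - z x| := abs_add_le _ _
        _ ≤ η/2 + η/2 := add_le_add (hb1 x) (hb2 x)
        _ = η := by ring
    | smul r y _ hy =>
      intro η hη
      obtain ⟨g, hg, hb⟩ := hy (η/(|r|+1)) (by positivity)
      refine ⟨fun x => r * g x, hg.smul r, fun x => ?_⟩
      simp only [ContinuousMap.smul_apply, smul_eq_mul]
      calc |r * g (x:Fin m → ℝ) - r * y x| = |r| * |g (x:Fin m → ℝ) - y x| := by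
            rw [← abs_mul]; congr 1; ring
        _ ≤ |r| * (η/(|r|+1)) := by gcongr; exact hb x
        _ ≤ (|r|+1) * (η/(|r|+1)) := by gcongr; linarith [abs_nonneg r]
        _ = η := by field_simp
  obtain ⟨g, hg, hgb⟩ := happrox v hvA (ε/2) (by positivity)
  refine ⟨g, hg, fun x hx => ?_⟩
  have h1' := hgb ⟨x, hx⟩
  have h2' : |v ⟨x, hx⟩ - f x| ≤ ε/2 := by
    have := ContinuousMap.dist_apply_le_dist (f := v) (g := F) (⟨x, hx⟩ : K)
    rw [Real.dist_eq] at this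
    calc |v ⟨x, hx⟩ - f x| = dist (v ⟨x, hx⟩) (F ⟨x, hx⟩) := by rw [Real.dist_eq]; rfl
      _ ≤ dist v F := ContinuousMap.dist_apply_le_dist _
      _ ≤ ε/2 := by rw [dist_comm]; exact hvd.le
  calc |g x - f x| = |(g x - v ⟨x, hx⟩) + (v ⟨x, hx⟩ - f x)| := congrArg abs (by ring)
    _ ≤ |g x - v ⟨x, hx⟩| + |v ⟨x, hx⟩ - f x| := abs_add_le _ _
    _ ≤ ε/2 + ε/2 := add_le_add h1' h2'
    _ = ε := by ring

/-- Combine `m` scalar nets into one vector-valued ReLU net. -/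
lemma isReLUNet_of_components {m : ℕ} (g : Fin m → (Fin m → ℝ) → ℝ)
    (hg : ∀ i, IsScalarNet (g i)) : IsReLUNet (fun x i => g i x) := by
  choose k a wt bt c hrepr using hg
  let ι := (i : Fin m) × Fin (k i)
  let e : ι ≃ Fin (Fintype.card ι) := Fintype.equivFin ι
  refine ⟨Fintype.card ι,
    Matrix.of fun r j => wt (e.symm r).1 (e.symm r).2 j,
    fun r => bt (e.symm r).1 (e.symm r).2,
    Matrix.of fun i r => if (e.symm r).1 = i then a (e.symm r).1 (e.symm r).2 else 0,
    c, fun x => ?_⟩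
  funext i
  simp only [Pi.add_apply, Matrix.mulVec, dotProduct, Matrix.of_apply]
  have step1 : (∑ r : Fin (Fintype.card ι),
        (if (e.symm r).1 = i then a (e.symm r).1 (e.symm r).2 else 0)
          * max ((∑ j, wt (e.symm r).1 (e.symm r).2 j * x j) + bt (e.symm r).1 (e.symm r).2) 0)
      = ∑ p : ι, (if p.1 = i then a p.1 p.2 else 0)
          * max ((∑ j, wt p.1 p.2 j * x j) + bt p.1 p.2) 0 :=
    Equiv.sum_comp e.symm (fun p : ι => (if p.1 = i then a p.1 p.2 else 0)
      * max ((∑ j, wt p.1 p.2 j * x j) + bt p.1 p.2) 0)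
  have step2 : (∑ p : ι, (if p.1 = i then a p.1 p.2 else 0)
          * max ((∑ j, wt p.1 p.2 j * x j) + bt p.1 p.2) 0)
      = ∑ i' : Fin m, ∑ jj : Fin (k i'), (if i' = i then a i' jj else 0)
          * max ((∑ j, wt i' jj j * x j) + bt i' jj) 0 := by
    rw [← Finset.univ_sigma_univ, Finset.sum_sigma]
  have step3 : (∑ i' : Fin m, ∑ jj : Fin (k i'), (if i' = i then a i' jj else 0)
          * max ((∑ j, wt i' jj j * x j) + bt i' jj) 0)
      = ∑ jj : Fin (k i), a i jj * max ((∑ j, wt i jj j * x j) + bt i jj) 0 := by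
    rw [Finset.sum_eq_single i]
    · simp
    · intro i' _ hi'
      refine Finset.sum_eq_zero fun jj _ => ?_
      rw [if_neg hi', zero_mul]
    · simp
  rw [hrepr i x, step1, step2, step3]
  ring

/-- Vector-valued universal approximation by one-hidden-layer ReLU nets on a compact set. -/
lemma vec_dense {m : ℕ} (K : Set (Fin m → ℝ)) (hK : IsCompact K)
    (F : (Fin m → ℝ) → (Fin m → ℝ)) (hF : Continuous F) (ε : ℝ) (hε : 0 < ε) :
    ∃ A, IsReLUNet A ∧ ∀ x ∈ K, ‖A x - F x‖ ≤ ε := by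
  have hcomp : ∀ i : Fin m, ∃ g, IsScalarNet g ∧ ∀ x ∈ K, |g x - F x i| ≤ ε :=
    fun i => scalar_dense K hK _ ((continuous_apply i).comp hF) ε hε
  choose g hgnet hgb using hcomp
  refine ⟨fun x i => g i x, isReLUNet_of_components g hgnet, fun x hx => ?_⟩
  rw [pi_norm_le_iff_of_nonneg hε.le]
  intro i
  simpa [Real.norm_eq_abs] using hgb i x hx

lemma scaleNetIter_congr {m : ℕ} (T : (Fin m → ℝ) → (Fin m → ℝ))
    (A A' : ℕ → (Fin m → ℝ) → (Fin m → ℝ)) (t : ℕ)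
    (h : ∀ s, 1 ≤ s → s ≤ t → A s = A' s) :
    scaleNetIter T A t = scaleNetIter T A' t := by
  induction t with
  | zero => rfl
  | succ t ih =>
    have ih' := ih fun s h1 h2 => h s h1 (h2.trans (Nat.le_succ t))
    funext x
    show T (scaleNetIter T A t x) + A (t + 1) (scaleNetIter T A t x) = _
    rw [ih', h (t+1) (Nat.succ_le_succ (Nat.zero_le t)) le_rfl]
    rfl

/-- The n-step ScaleNet recurrence with a fixed shared layer `T` and per-step adapters
can uniformly track any prescribed composition `G_n ∘ ⋯ ∘ G₁` of `n` continuous maps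
on the input cube `[0,1]^m`. -/
theorem scalenet_tracks_composition
    (m : ℕ) (hm : 1 ≤ m)
    (T : (Fin m → ℝ) → (Fin m → ℝ)) (hT : Continuous T)
    (n : ℕ) (hn : 1 ≤ n)
    (G : ℕ → (Fin m → ℝ) → (Fin m → ℝ))
    (hG : ∀ t, 1 ≤ t → t ≤ n → Continuous (G t))
    (ε : ℝ) (hε : 0 < ε) :
    ∃ A : ℕ → (Fin m → ℝ) → (Fin m → ℝ),
      (∀ t, 1 ≤ t → t ≤ n → IsReLUNet (A t)) ∧
      ∀ x ∈ Set.Icc (0 : Fin m → ℝ) 1,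
        ‖scaleNetIter T A n x - compSeq G n x‖ ≤ ε := by
  have hCS : ∀ t, t ≤ n → Continuous (compSeq G t) := by
    intro t
    induction t with
    | zero => exact fun _ => continuous_id
    | succ t ih =>
      intro ht
      exact (hG (t+1) (Nat.succ_le_succ (Nat.zero_le t)) ht).comp
        (ih (Nat.le_of_succ_le ht))
  have main : ∀ t, t ≤ n → ∀ δ : ℝ, 0 < δ →
      ∃ A : ℕ → (Fin m → ℝ) → (Fin m → ℝ),
        (∀ s, 1 ≤ s → s ≤ t → IsReLUNet (A s)) ∧
        ∀ x ∈ Set.Icc (0 : Fin m → ℝ) 1,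
          ‖scaleNetIter T A t x - compSeq G t x‖ ≤ δ := by
    intro t
    induction t with
    | zero =>
      intro _ δ hδ
      refine ⟨fun _ _ => 0, fun s h1 h2 => absurd (h1.trans h2) (by omega), fun x _ => ?_⟩
      show ‖x - x‖ ≤ δ
      simp [hδ.le]
    | succ t ih =>
      intro ht δ hδ
      have ht' : t ≤ n := Nat.le_of_succ_le ht
      have hG' : Continuous (G (t+1)) := hG (t+1) (Nat.succ_le_succ (Nat.zero_le t)) ht
      -- compact sets
      have hcube : IsCompact (Set.Icc (0 : Fin m → ℝ) 1) := isCompact_Icc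
      have hKc : IsCompact (compSeq G t '' Set.Icc (0 : Fin m → ℝ) 1) :=
        hcube.image (hCS t ht')
      set Kc := compSeq G t '' Set.Icc (0 : Fin m → ℝ) 1 with hKcdef
      have hK1 : IsCompact (Metric.cthickening 1 Kc) := hKc.cthickening
      set K1 := Metric.cthickening 1 Kc with hK1def
      -- uniform continuity of G (t+1) on K1
      have huc := hK1.uniformContinuousOn_of_continuous hG'.continuousOn
      rw [Metric.uniformContinuousOn_iff] at huc
      obtain ⟨η0, hη0, hmod⟩ := huc (δ/2) (by positivity)
      set η : ℝ := min (η0/2) 1 with hηdef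
      have hηpos : 0 < η := lt_min (by positivity) one_pos
      -- inductive hypothesis
      obtain ⟨A₀, hA₀net, hA₀b⟩ := ih ht' η hηpos
      -- the adapter for step t+1
      obtain ⟨N, hNnet, hNb⟩ := vec_dense K1 hK1
        (fun y => G (t+1) y - T y) (hG'.sub hT) (δ/2) (by positivity)
      set A : ℕ → (Fin m → ℝ) → (Fin m → ℝ) := Function.update A₀ (t+1) N with hAdef
      have hAeq : ∀ s, 1 ≤ s → s ≤ t → A s = A₀ s := by
        intro s _ hs2
        exact Function.update_of_ne (by omega) _ _
      have hAt1 : A (t+1) = N := Function.update_self _ _ _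
      refine ⟨A, fun s h1 h2 => ?_, fun x hx => ?_⟩
      · rcases Nat.lt_or_ge s (t+1) with h | h
        · rw [hAeq s h1 (Nat.lt_succ_iff.1 h)]
          exact hA₀net s h1 (Nat.lt_succ_iff.1 h)
        · have : s = t+1 := le_antisymm h2 h
          rw [this, hAt1]
          exact hNnet
      · -- the error bound
        have hiter : scaleNetIter T A t = scaleNetIter T A₀ t :=
          scaleNetIter_congr T A A₀ t hAeq
        set y := scaleNetIter T A t x with hydef
        set c := compSeq G t x with hcdef
        have hyc : ‖y - c‖ ≤ η := by
          rw [hydef, hiter]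
          exact hA₀b x hx
        have hcK : c ∈ Kc := ⟨x, hx, rfl⟩
        have hcK1 : c ∈ K1 := Metric.self_subset_cthickening _ hcK
        have hyK1 : y ∈ K1 := by
          refine Metric.mem_cthickening_of_dist_le y c 1 _ hcK ?_
          rw [dist_eq_norm]
          exact hyc.trans (min_le_right _ _)
        have hGyc : ‖G (t+1) y - G (t+1) c‖ ≤ δ/2 := by
          have hd : dist y c < η0 := by
            rw [dist_eq_norm]
            calc ‖y - c‖ ≤ η := hyc
              _ ≤ η0/2 := min_le_left _ _
              _ < η0 := by linarith
          have := hmod y hyK1 c hcK1 hd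
          rw [dist_eq_norm] at this
          exact this.le
        have hNy : ‖N y - (G (t+1) y - T y)‖ ≤ δ/2 := hNb y hyK1
        have hstep : scaleNetIter T A (t+1) x = T y + N y := by
          show T (scaleNetIter T A t x) + A (t+1) (scaleNetIter T A t x) = _
          rw [hAt1, ← hydef]
        have hcomp' : compSeq G (t+1) x = G (t+1) c := rfl
        rw [hstep, hcomp']
        have hdecomp : T y + N y - G (t+1) c
            = (N y - (G (t+1) y - T y)) + (G (t+1) y - G (t+1) c) := by abel
        rw [hdecomp]
        calc ‖(N y - (G (t+1) y - T y)) + (G (t+1) y - G (t+1) c)‖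
            ≤ ‖N y - (G (t+1) y - T y)‖ + ‖G (t+1) y - G (t+1) c‖ := norm_add_le _ _
          _ ≤ δ/2 + δ/2 := add_le_add hNy hGyc
          _ = δ := by ring
  exact main n le_rfl ε hε
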